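/- arXiv:2006.12207 — 2 statements merged into one kernel-verified Lean document; each statement's English description precedes it below -/
import Mathlib

section
/- Let A be a finite alphabet, u ∈ A^ℕ an infinite word, and φ: A* → A* a morphism in Class P_ret with marker w such that the last letters of the words φ(c), c ∈ A, are not all equal and the map ρ sending each letter c to the last letter of φ(c) is injective. Then for all letters a, b ∈ A and every finite word v ∈ A*: the word a v b is a factor of u if and only if the word ρ(a) φ(v) w ρ(b) is a factor of φ(u). -/
open List

/-- Apply a morphism (given by its values on letters) to a finite word. -/
def applyM {A : Type*} (φ : A → List A) (v : List A) : List A := v.flatMap φ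

/-- The set of occurrences of `w` as a factor of `u`:
indices `i` such that the block of `u` of length `|w|` starting at `i` equals `w`. -/
def occs {A : Type*} [DecidableEq A] (w u : List A) : Finset ℕ :=
  (Finset.range (u.length + 1)).filter
    (fun i => i + w.length ≤ u.length ∧ (u.drop i).take w.length = w)

/-- A morphism `φ` belongs to Class `P_ret` with marker `w` if it is injective on
letters, `w` is a palindrome, and for each letter `a` the word `φ(a)w` is a palindrome
in which `w` occurs exactly twice, namely as a prefix (position `0`) and as a suffix
(position `|φ(a)|`, distinct from `0`). -/
def IsPretWithMarker {A : Type*} [DecidableEq A] (φ : A → List A) (w : List A) : Prop :=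
  Function.Injective φ ∧ w.reverse = w ∧
    ∀ a : A, (φ a ++ w).reverse = φ a ++ w ∧
      occs w (φ a ++ w) = {0, (φ a).length} ∧ (φ a).length ≠ 0

/-- The block of length `len` of the infinite word `u` starting at position `i`. -/
def factorAt {A : Type*} (u : ℕ → A) (i len : ℕ) : List A :=
  (List.range len).map fun k => u (i + k)

/-- `i` is an occurrence of the finite word `v` in the infinite word `u`. -/
def OccursAt {A : Type*} (u : ℕ → A) (v : List A) (i : ℕ) : Prop :=
  factorAt u i v.length = v

/-- `v` belongs to the language of the infinite word `u`, i.e. `v` is a factor of `u`. -/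
def InLang {A : Type*} (u : ℕ → A) (v : List A) : Prop := ∃ i, OccursAt u v i

/-- The image `φ(u) = φ(u₀)φ(u₁)φ(u₂)⋯` of an infinite word `u` under a
(non-erasing) morphism `φ`, as an infinite word. -/
def applyInf {A : Type*} (φ : A → List A) (u : ℕ → A) (n : ℕ) : A :=
  (((List.range (n + 1)).flatMap fun i => φ (u i))).getD n (u 0)

/-- The language of `u` is closed under reversal. -/
def ClosedUnderReversal {A : Type*} (u : ℕ → A) : Prop :=
  ∀ v : List A, InLang u v → InLang u v.reverse

/-- A finite word is rich if its number of palindromic factors (including `ε`)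
equals its length plus one. -/
def RichWord {A : Type*} (u : List A) : Prop :=
  {p : List A | p <:+: u ∧ p.reverse = p}.ncard = u.length + 1

/-- An infinite word is rich if all its finite prefixes are rich. -/
def RichInf {A : Type*} (u : ℕ → A) : Prop := ∀ n : ℕ, RichWord (factorAt u 0 n)

/-- An infinite word is recurrent if each of its factors occurs infinitely often. -/
def Recurrent {A : Type*} (u : ℕ → A) : Prop :=
  ∀ v : List A, InLang u v → ∀ N : ℕ, ∃ i, N ≤ i ∧ OccursAt u v i

/-- `r` is a return word to `w` in the infinite word `u`: `wr ∈ L(u)` and `w`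
occurs in `wr` exactly twice, as a prefix and as a suffix. -/
def IsReturnWord {A : Type*} [DecidableEq A] (u : ℕ → A) (w r : List A) : Prop :=
  r ≠ [] ∧ InLang u (w ++ r) ∧ occs w (w ++ r) = {0, r.length}

/-- Left extensions of `x` in the language of `u`. -/
def leftExt {A : Type*} (u : ℕ → A) (x : List A) : Set A := {a | InLang u (a :: x)}

/-- Right extensions of `x` in the language of `u`. -/
def rightExt {A : Type*} (u : ℕ → A) (x : List A) : Set A := {b | InLang u (x ++ [b])}

/-- Bi-extensions of `x` in the language of `u`. -/
def biExt {A : Type*} (u : ℕ → A) (x : List A) : Set (A × A) :=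
  {p | InLang u (p.1 :: (x ++ [p.2]))}

/-- `x` is bispecial in `u`. -/
def Bispecial {A : Type*} (u : ℕ → A) (x : List A) : Prop :=
  2 ≤ (leftExt u x).ncard ∧ 2 ≤ (rightExt u x).ncard

/-- The bilateral order `b_u(x) = #B_u(x) − #L_u(x) − #R_u(x) + 1`. -/
noncomputable def bilateralOrder {A : Type*} (u : ℕ → A) (x : List A) : ℤ :=
  ((biExt u x).ncard : ℤ) - (leftExt u x).ncard - (rightExt u x).ncard + 1

/-- The number of palindromic extensions of `x` in `u`. -/
noncomputable def pext {A : Type*} (u : ℕ → A) (x : List A) : ℕ :=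
  {a | InLang u (a :: (x ++ [a]))}.ncard

/-- Arnoux-Rauzy morphisms: the monoid of morphisms generated by permutations of the
alphabet and by the elementary morphisms `ψ_a : a ↦ a, b ↦ ab` and `ψ̄_a : a ↦ a, b ↦ ba`. -/
inductive IsAR {A : Type*} [DecidableEq A] : (A → List A) → Prop
  | perm (π : Equiv.Perm A) : IsAR (fun a => [π a])
  | psiL (a : A) : IsAR (fun b => if b = a then [a] else [a, b])
  | psiR (a : A) : IsAR (fun b => if b = a then [a] else [b, a])
  | comp {φ ψ : A → List A} : IsAR φ → IsAR ψ → IsAR (fun a => applyM φ (ψ a))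

/-- The `k`-th power `φ^k` of a morphism. -/
def powM {A : Type*} (φ : A → List A) : ℕ → A → List A
  | 0, a => [a]
  | n + 1, a => applyM (powM φ n) (φ a)

/-- A morphism is primitive if some power of it maps every letter to a word
containing every letter. -/
def PrimitiveM {A : Type*} (φ : A → List A) : Prop :=
  ∃ k : ℕ, ∀ a b : A, b ∈ powM φ k a

/-- A (acyclic) morphism is marked: it has a rightmost conjugate `φR` whose
last-letter map is injective, and a leftmost conjugate `φL` whose first-letter map
is injective. -/
def Marked {A : Type*} (φ : A → List A) : Prop :=
  ∃ (φR φL : A → List A) (x y : List A),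
    (∀ a, φ a ++ x = x ++ φR a) ∧
    (∀ a, φL a ++ y = y ++ φ a) ∧
    (∃ a b : A, (φR a).getLast? ≠ (φR b).getLast?) ∧
    (∃ a b : A, (φL a).head? ≠ (φL b).head?) ∧
    Function.Injective (fun c => (φR c).getLast?) ∧
    Function.Injective (fun c => (φL c).head?)

section Helpers
set_option linter.unusedSectionVars false
variable {A : Type*} [DecidableEq A]

/-- prefix of the image word: φ(u₀)⋯φ(u_{m-1}) -/
def pretSeg (φ : A → List A) (u : ℕ → A) (m : ℕ) : List A :=
  (List.range m).flatMap fun i => φ (u i)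

lemma pretSeg_succ (φ : A → List A) (u : ℕ → A) (m : ℕ) :
    pretSeg φ u (m + 1) = pretSeg φ u m ++ φ (u m) := by
  simp [pretSeg, List.range_succ]

lemma factorAt_succ (u : ℕ → A) (i t : ℕ) :
    factorAt u i (t + 1) = factorAt u i t ++ [u (i + t)] := by
  simp [factorAt, List.range_succ]

lemma applyM_append (φ : A → List A) (x y : List A) :
    applyM φ (x ++ y) = applyM φ x ++ applyM φ y := by
  simp [applyM]

lemma pretSeg_add (φ : A → List A) (u : ℕ → A) (s t : ℕ) :
    pretSeg φ u (s + t) = pretSeg φ u s ++ applyM φ (factorAt u s t) := by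
  induction t with
  | zero => simp [factorAt, applyM]
  | succ t ih =>
    rw [← Nat.add_assoc, pretSeg_succ, ih, factorAt_succ, applyM_append]
    simp [applyM]

lemma length_applyM_ge {φ : A → List A} (hφ : ∀ c, 1 ≤ (φ c).length) (y : List A) :
    y.length ≤ (applyM φ y).length := by
  induction y with
  | nil => simp [applyM]
  | cons c y ih =>
    have := hφ c
    simp only [applyM, List.flatMap_cons, List.length_append, List.length_cons] at ih ⊢
    omega

lemma factorAt_length (u : ℕ → A) (i len : ℕ) : (factorAt u i len).length = len := by
  simp [factorAt]

lemma pretSeg_len_mono {φ : A → List A} (hφ : ∀ c, 1 ≤ (φ c).length) (u : ℕ → A)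
    {s t : ℕ} (h : s ≤ t) :
    (pretSeg φ u s).length + (t - s) ≤ (pretSeg φ u t).length := by
  obtain ⟨k, rfl⟩ := Nat.exists_eq_add_of_le h
  rw [pretSeg_add]
  have := length_applyM_ge hφ (factorAt u s k)
  rw [factorAt_length] at this
  simp only [List.length_append]
  omega

lemma pretSeg_len_ge {φ : A → List A} (hφ : ∀ c, 1 ≤ (φ c).length) (u : ℕ → A) (m : ℕ) :
    m ≤ (pretSeg φ u m).length := by
  have := pretSeg_len_mono hφ u (Nat.zero_le m)
  simpa [pretSeg] using this

lemma pretSeg_prefix (φ : A → List A) (u : ℕ → A) {s t : ℕ} (h : s ≤ t) :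
    pretSeg φ u s <+: pretSeg φ u t := by
  obtain ⟨k, rfl⟩ := Nat.exists_eq_add_of_le h
  rw [pretSeg_add]; exact List.prefix_append _ _

lemma getElem_mid {l₁ l₂ : List A} {c : A} {e : ℕ} (he : e = l₁.length)
    (hb : e < (l₁ ++ [c] ++ l₂).length) : (l₁ ++ [c] ++ l₂)[e] = c := by
  subst he
  have : (l₁ ++ [c] ++ l₂)[l₁.length] = (l₁ ++ ([c] ++ l₂))[l₁.length] := by
    simp [List.append_assoc]
  rw [this, List.getElem_append_right (le_refl _)]
  simp

/-- drop/take inside a prefix -/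
lemma prefix_drop_take {s t : List A} (h : s <+: t) {p len : ℕ} (hp : p + len ≤ s.length) :
    (t.drop p).take len = (s.drop p).take len := by
  obtain ⟨r, rfl⟩ := h
  rw [List.drop_append_of_le_length (by omega), List.take_append_of_le_length (by simp; omega)]

lemma occursAt_letter {u : ℕ → A} {y : List A} {i : ℕ} (hc : OccursAt u y i)
    {t : ℕ} (ht : t < y.length) : u (i + t) = y[t] := by
  have h2 : t < (factorAt u i y.length).length := by simpa [factorAt] using ht
  have := List.getElem_of_eq hc h2
  simpa [factorAt] using this

lemma occursAt_of_letters {u : ℕ → A} {y : List A} {i : ℕ}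
    (hl : ∀ t (ht : t < y.length), u (i + t) = y[t]) : OccursAt u y i := by
  apply List.ext_getElem (by simp [factorAt])
  intro t h1 h2
  simp only [factorAt, List.getElem_map, List.getElem_range]
  exact hl t (by simpa [factorAt] using h2)

lemma applyInf_getElem {φ : A → List A} (hφ : ∀ c, 1 ≤ (φ c).length) (u : ℕ → A)
    {M n : ℕ} (hn : n < (pretSeg φ u M).length) :
    applyInf φ u n = (pretSeg φ u M)[n] := by
  have hd : applyInf φ u n = (pretSeg φ u (n + 1)).getD n (u 0) := rfl
  have hn1 : n < (pretSeg φ u (n + 1)).length :=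
    lt_of_lt_of_le (Nat.lt_succ_self n) (pretSeg_len_ge hφ u (n + 1))
  rcases le_total (n + 1) M with hM | hM
  · have hp := pretSeg_prefix φ u hM
    rw [hd, List.getD_eq_getElem _ _ hn1, hp.getElem hn1]
  · have hp := pretSeg_prefix φ u hM
    rw [hd, List.getD_eq_getElem _ _ hn1, ← hp.getElem hn]

lemma factorAt_applyInf {φ : A → List A} (hφ : ∀ c, 1 ≤ (φ c).length) (u : ℕ → A)
    {M j len : ℕ} (hj : j + len ≤ (pretSeg φ u M).length) :
    factorAt (applyInf φ u) j len = ((pretSeg φ u M).drop j).take len := by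
  apply List.ext_getElem (by simp [factorAt]; omega)
  intro t h1 h2
  have ht : t < len := by simpa [factorAt] using h1
  simp only [factorAt, List.getElem_map, List.getElem_range, List.getElem_take,
    List.getElem_drop]
  exact applyInf_getElem hφ u (by omega)

lemma occursAt_applyInf_iff {φ : A → List A} (hφ : ∀ c, 1 ≤ (φ c).length) (u : ℕ → A)
    {M : ℕ} {x : List A} {j : ℕ} (hb : j + x.length ≤ (pretSeg φ u M).length) :
    OccursAt (applyInf φ u) x j ↔ ((pretSeg φ u M).drop j).take x.length = x := by
  unfold OccursAt
  rw [factorAt_applyInf hφ u hb]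

variable {φ : A → List A} {w : List A}

lemma pret_len (h : IsPretWithMarker φ w) (c : A) : 1 ≤ (φ c).length :=
  Nat.pos_of_ne_zero (h.2.2 c).2.2

lemma pret_pal (h : IsPretWithMarker φ w) (c : A) : φ c ++ w = w ++ (φ c).reverse := by
  conv_lhs => rw [← (h.2.2 c).1]
  rw [List.reverse_append, h.2.1]

lemma pret_ret (h : IsPretWithMarker φ w) (c : A) {p : ℕ} (hp : p ≤ (φ c).length)
    (hocc : ((φ c ++ w).drop p).take w.length = w) : p = 0 ∨ p = (φ c).length := by
  have hmem : p ∈ occs w (φ c ++ w) := by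
    simp only [occs, Finset.mem_filter, Finset.mem_range, List.length_append]
    exact ⟨by omega, by omega, hocc⟩
  rw [(h.2.2 c).2.1] at hmem
  simpa using hmem

lemma pret_segw_prefix (h : IsPretWithMarker φ w) (u : ℕ → A) {s t : ℕ} (hst : s ≤ t) :
    pretSeg φ u s ++ w <+: pretSeg φ u t ++ w := by
  induction t with
  | zero =>
    have hs : s = 0 := by omega
    subst hs; exact List.prefix_refl _
  | succ t ih =>
    rcases Nat.lt_or_ge s (t+1) with hlt | hge
    · refine (ih (by omega)).trans ?_
      rw [pretSeg_succ, List.append_assoc, pret_pal h (u t), ← List.append_assoc]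
      exact List.prefix_append _ _
    · have : s = t + 1 := by omega
      subst this; exact List.prefix_refl _

lemma pret_segw_prefix_seg (h : IsPretWithMarker φ w) (u : ℕ → A) (m : ℕ) :
    pretSeg φ u m ++ w <+: pretSeg φ u (m + w.length) := by
  apply List.prefix_of_prefix_length_le (pret_segw_prefix h u (Nat.le_add_right m w.length))
    (List.prefix_append _ _)
  have := pretSeg_len_mono (pret_len h) u (Nat.le_add_right m w.length)
  simp only [List.length_append]
  omega

/-- synchronization in finite prefixes: every occurrence of `w` in `pretSeg m ++ w`
is at a block boundary. -/
lemma pret_sync (h : IsPretWithMarker φ w) (u : ℕ → A) (m : ℕ) :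
    ∀ p, p ≤ (pretSeg φ u m).length →
      ((pretSeg φ u m ++ w).drop p).take w.length = w →
      ∃ k ≤ m, p = (pretSeg φ u k).length := by
  induction m with
  | zero =>
    intro p hp _
    refine ⟨0, le_refl 0, ?_⟩
    simpa [pretSeg] using hp
  | succ m ih =>
    intro p hp hocc
    rcases Nat.lt_or_ge (pretSeg φ u m).length p with hgt | hle
    · -- occurrence inside φ(u m) ++ w
      have hsplit : pretSeg φ u (m+1) ++ w = pretSeg φ u m ++ (φ (u m) ++ w) := by
        rw [pretSeg_succ, List.append_assoc]
      set q := p - (pretSeg φ u m).length with hq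
      have hocc' : ((φ (u m) ++ w).drop q).take w.length = w := by
        have : (pretSeg φ u m ++ (φ (u m) ++ w)).drop p = (φ (u m) ++ w).drop q := by
          rw [show p = (pretSeg φ u m).length + q by omega]
          simp [List.drop_append]
        rw [hsplit, this] at hocc
        exact hocc
      have hqle : q ≤ (φ (u m)).length := by
        have := hp
        rw [pretSeg_succ] at this
        simp only [List.length_append] at this
        omega
      rcases pret_ret h (u m) hqle hocc' with h0 | hend
      · omega
      · exact ⟨m + 1, le_refl _, by rw [pretSeg_succ]; simp only [List.length_append]; omega⟩
    · -- occurrence within pretSeg m ++ w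
      have heq := prefix_drop_take (s := pretSeg φ u m ++ w)
        (t := pretSeg φ u (m+1) ++ w) (pret_segw_prefix h u (Nat.le_succ m))
        (p := p) (len := w.length) (by simp only [List.length_append]; omega)
      rw [heq] at hocc
      obtain ⟨k, hk, hpk⟩ := ih p hle hocc
      exact ⟨k, by omega, hpk⟩

/-- synchronization in the infinite image word. -/
lemma pret_sync_inf (h : IsPretWithMarker φ w) (u : ℕ → A) {p : ℕ}
    (hocc : factorAt (applyInf φ u) p w.length = w) :
    ∃ k, p = (pretSeg φ u k).length := by
  set M := p + w.length with hM
  have hb : p + w.length ≤ (pretSeg φ u M).length := pretSeg_len_ge (pret_len h) u M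
  rw [factorAt_applyInf (pret_len h) u hb] at hocc
  have hocc' : ((pretSeg φ u M ++ w).drop p).take w.length = w := by
    rw [prefix_drop_take (List.prefix_append _ _) hb]
    exact hocc
  obtain ⟨k, _, hk⟩ := pret_sync h u M p (by omega) hocc'
  exact ⟨k, hk⟩

variable {ρ : A → A}

lemma pret_split (hρ : ∀ c : A, (φ c).getLast? = some (ρ c)) (c : A) :
    ∃ l', φ c = l' ++ [ρ c] := by
  rw [← List.getLast?_eq_some_iff]
  exact hρ c

/-- the letter just before the block boundary `P (k+1)` is `ρ (u k)`. -/
lemma pret_letter_before (h : IsPretWithMarker φ w)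
    (hρ : ∀ c : A, (φ c).getLast? = some (ρ c)) (u : ℕ → A) (k : ℕ) :
    applyInf φ u ((pretSeg φ u (k+1)).length - 1) = ρ (u k) := by
  obtain ⟨l', hl⟩ := pret_split hρ (u k)
  have hseg : pretSeg φ u (k+1) = (pretSeg φ u k ++ l') ++ [ρ (u k)] := by
    rw [pretSeg_succ, hl, List.append_assoc]
  have hlen : (pretSeg φ u (k+1)).length = (pretSeg φ u k ++ l').length + 1 := by
    rw [hseg]; simp [Nat.add_assoc]
  rw [applyInf_getElem (pret_len h) u (M := k+1) (by omega)]
  simp only [hseg]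
  rw [List.getElem_concat_length (by simp)]

/-- `pretSeg k · w · ρ(u k)` is a prefix of a long enough `pretSeg`. -/
lemma pret_segw_rho_prefix (h : IsPretWithMarker φ w)
    (hρ : ∀ c : A, (φ c).getLast? = some (ρ c)) (u : ℕ → A) (k : ℕ) :
    (pretSeg φ u k ++ w) ++ [ρ (u k)] <+: pretSeg φ u (k + 1 + w.length) := by
  obtain ⟨l', hl⟩ := pret_split hρ (u k)
  have hstep1 : (pretSeg φ u k ++ w) ++ [ρ (u k)] <+: pretSeg φ u (k+1) ++ w := by
    have hrw : pretSeg φ u (k+1) ++ w = pretSeg φ u k ++ (w ++ (φ (u k)).reverse) := by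
      rw [pretSeg_succ, List.append_assoc, pret_pal h (u k)]
    rw [hrw, hl, List.reverse_append]
    exact ⟨l'.reverse, by simp⟩
  exact hstep1.trans (pret_segw_prefix_seg h u (k+1))

/-- the letter at position `P k + |w|` is `ρ (u k)`. -/
lemma pret_letter_after_w (h : IsPretWithMarker φ w)
    (hρ : ∀ c : A, (φ c).getLast? = some (ρ c)) (u : ℕ → A) (k : ℕ) :
    applyInf φ u ((pretSeg φ u k).length + w.length) = ρ (u k) := by
  have hpre := pret_segw_rho_prefix h hρ u k
  have hn : (pretSeg φ u k).length + w.length < ((pretSeg φ u k ++ w) ++ [ρ (u k)]).length := by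
    simp
  rw [applyInf_getElem (pret_len h) u (M := k + 1 + w.length)
    (lt_of_lt_of_le hn hpre.length_le)]
  rw [← hpre.getElem hn]
  rw [List.getElem_concat_length (by simp)]

end Helpers

/-- Let `φ ∈ P_ret` be marked with marker `w`, equal to its rightmost
conjugate, and `ρ` the (injective) last-letter map. Then `a v b` is a factor of `u`
iff `ρ(a) φ(v) w ρ(b)` is a factor of `φ(u)`. -/
theorem pret_marked_biextensions {A : Type*} [Fintype A] [DecidableEq A]
    (φ : A → List A) (w : List A) (ρ : A → A) (h : IsPretWithMarker φ w)
    (hρ : ∀ c : A, (φ c).getLast? = some (ρ c))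
    (hne : ∃ c d : A, ρ c ≠ ρ d)
    (hinj : Function.Injective ρ)
    (u : ℕ → A) (a b : A) (v : List A) :
    InLang u (a :: (v ++ [b])) ↔
      InLang (applyInf φ u) (ρ a :: (applyM φ v ++ w ++ [ρ b])) := by
  have hφ1 := pret_len h
  constructor
  · rintro ⟨i, hi⟩
    have hylen : (a :: (v ++ [b])).length = v.length + 2 := by simp
    have hy0 : u i = a := by
      have := occursAt_letter hi (t := 0) (by simp)
      simpa using this
    have hyb : u (i + 1 + v.length) = b := by
      have := occursAt_letter hi (t := v.length + 1) (by simp)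
      rw [show i + (v.length + 1) = i + 1 + v.length by omega] at this
      rw [this]
      simp
    have hyv : ∀ s (hs : s < v.length), u (i + 1 + s) = v[s] := by
      intro s hs
      have := occursAt_letter hi (t := s + 1) (by simp; omega)
      rw [show i + (s + 1) = i + 1 + s by omega] at this
      rw [this]
      simp [List.getElem_append_left hs]
    set m := i + 1 + v.length with hm
    have hfa : factorAt u i (1 + v.length) = a :: v := by
      apply List.ext_getElem (by simp [factorAt]; omega)
      intro t h1 h2
      simp only [factorAt, List.getElem_map, List.getElem_range]
      rcases t with _ | s
      · simpa using hy0
      · have hs : s < v.length := by simp [factorAt] at h1; omega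
        rw [show i + (s + 1) = i + 1 + s by omega]
        simpa using hyv s hs
    have hsegm : pretSeg φ u m = pretSeg φ u i ++ (φ a ++ applyM φ v) := by
      rw [show m = i + (1 + v.length) by omega, pretSeg_add, hfa]
      simp [applyM]
    obtain ⟨l', hl⟩ := pret_split hρ a
    have hZpre : (pretSeg φ u m ++ w) ++ [ρ b] <+: pretSeg φ u (m + 1 + w.length) := by
      have := pret_segw_rho_prefix h hρ u m
      rwa [hyb] at this
    have hZx : (pretSeg φ u m ++ w) ++ [ρ b]
        = (pretSeg φ u i ++ l') ++ (ρ a :: (applyM φ v ++ w ++ [ρ b])) := by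
      rw [hsegm, hl]
      simp [List.append_assoc]
    refine ⟨(pretSeg φ u i ++ l').length, ?_⟩
    have hbound : (pretSeg φ u i ++ l').length + (ρ a :: (applyM φ v ++ w ++ [ρ b])).length
        ≤ (pretSeg φ u (m + 1 + w.length)).length := by
      have h1 := hZpre.length_le
      rw [hZx] at h1
      simp at h1 ⊢
      omega
    rw [occursAt_applyInf_iff hφ1 u hbound]
    rw [prefix_drop_take hZpre (by rw [hZx]; simp; omega), hZx, List.drop_left, List.take_length]
  · rintro ⟨j, hj⟩
    have hxlen : (ρ a :: (applyM φ v ++ w ++ [ρ b])).length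
        = (applyM φ v).length + w.length + 2 := by simp; omega
    -- letter facts from the occurrence
    have hx0 : applyInf φ u j = ρ a := by
      have := occursAt_letter hj (t := 0) (by simp)
      simpa using this
    have hxb : applyInf φ u (j + 1 + (applyM φ v).length + w.length) = ρ b := by
      have hb : 1 + (applyM φ v).length + w.length
          < (ρ a :: (applyM φ v ++ w ++ [ρ b])).length := by simp; omega
      have h1 := occursAt_letter hj (t := 1 + (applyM φ v).length + w.length) hb
      rw [show j + (1 + (applyM φ v).length + w.length)
          = j + 1 + (applyM φ v).length + w.length by omega] at h1
      rw [h1]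
      have h2 : (ρ a :: (applyM φ v ++ w ++ [ρ b]))[1 + (applyM φ v).length + w.length]'hb
          = (applyM φ v ++ w ++ [ρ b])[(applyM φ v ++ w).length]'(by simp) := by
        rw [List.getElem_of_eq (show (ρ a :: (applyM φ v ++ w ++ [ρ b]))
            = [ρ a] ++ (applyM φ v ++ w ++ [ρ b]) from rfl)]
        rw [List.getElem_append_right (by simp only [List.length_singleton]; omega : ([ρ a]:List A).length ≤ 1 + (applyM φ v).length + w.length)]
        exact getElem_congr_idx (by simp only [List.length_singleton, List.length_append]; omega)
      rw [h2, List.getElem_concat_length rfl]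
    have hxw : ∀ r (hr : r < w.length),
        applyInf φ u (j + 1 + (applyM φ v).length + r) = w[r]'hr := by
      intro r hr
      have hb : 1 + (applyM φ v).length + r
          < (ρ a :: (applyM φ v ++ w ++ [ρ b])).length := by simp; omega
      have h1 := occursAt_letter hj (t := 1 + (applyM φ v).length + r) hb
      rw [show j + (1 + (applyM φ v).length + r)
          = j + 1 + (applyM φ v).length + r by omega] at h1
      rw [h1]
      rw [List.getElem_of_eq (show (ρ a :: (applyM φ v ++ w ++ [ρ b]))
          = [ρ a] ++ (applyM φ v ++ w ++ [ρ b]) from rfl)]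
      rw [List.getElem_append_right (by simp only [List.length_singleton]; omega : ([ρ a]:List A).length ≤ 1 + (applyM φ v).length + r)]
      simp only [List.length_singleton]
      have h2 : (applyM φ v ++ w ++ [ρ b])[1 + (applyM φ v).length + r - 1]'(by simp; omega)
          = (applyM φ v ++ w)[1 + (applyM φ v).length + r - 1]'(by simp; omega) :=
        List.getElem_append_left (by simp; omega)
      rw [h2]
      rw [List.getElem_append_right (by omega)]
      exact getElem_congr_idx (by omega)
    have hxv : ∀ e (he1 : 1 ≤ e) (he2 : e ≤ (applyM φ v).length),
        applyInf φ u (j + e) = (applyM φ v)[e - 1]'(by omega) := by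
      intro e he1 he2
      have hb : e < (ρ a :: (applyM φ v ++ w ++ [ρ b])).length := by simp; omega
      have h1 := occursAt_letter hj (t := e) hb
      rw [h1]
      rw [List.getElem_of_eq (show (ρ a :: (applyM φ v ++ w ++ [ρ b]))
          = [ρ a] ++ (applyM φ v ++ w ++ [ρ b]) from rfl)]
      rw [List.getElem_append_right (by simp only [List.length_singleton]; omega : ([ρ a]:List A).length ≤ e)]
      simp only [List.length_singleton]
      have h2 : (applyM φ v ++ w ++ [ρ b])[e - 1]'(by simp; omega)
          = (applyM φ v ++ w)[e - 1]'(by simp; omega) :=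
        List.getElem_append_left (by simp; omega)
      rw [h2]
      exact List.getElem_append_left (by omega)
    -- the marker occurs right after φ(v), hence at a block boundary
    have hwocc : factorAt (applyInf φ u) (j + 1 + (applyM φ v).length) w.length = w := by
      apply occursAt_of_letters
      intro r hr
      exact hxw r hr
    obtain ⟨K, hK⟩ := pret_sync_inf h u hwocc
    -- helper facts on images of prefixes of v
    have hlen_take : ∀ t, (applyM φ (v.take t)).length ≤ (applyM φ v).length := by
      intro t
      conv_rhs => rw [← List.take_append_drop t v]
      rw [applyM_append]
      simp
    have htake_succ : ∀ t (ht : t < v.length),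
        applyM φ (v.take (t+1)) = applyM φ (v.take t) ++ φ (v[t]) := by
      intro t ht
      rw [← List.take_concat_get ht, List.concat_eq_append, applyM_append]
      simp [applyM]
    -- main downward induction, peeling blocks from the right
    have C : ∀ d, d ≤ v.length →
        (pretSeg φ u (K - d)).length = j + 1 + (applyM φ (v.take (v.length - d))).length
        ∧ d ≤ K
        ∧ ∀ s, v.length - d ≤ s → ∀ hs : s < v.length, u (K - (v.length - s)) = v[s] := by
      intro d
      induction d with
      | zero =>
        intro _
        refine ⟨?_, Nat.zero_le K, fun s hs1 hs2 => absurd hs2 (by omega)⟩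
        simp only [Nat.sub_zero, List.take_length]
        omega
      | succ d ih =>
        intro hd1
        obtain ⟨ihP, ihK, ihlet⟩ := ih (by omega)
        have htv : v.length - (d+1) < v.length := by omega
        have ht1 : v.length - d = v.length - (d+1) + 1 := by omega
        rw [ht1] at ihP
        have hsucc := htake_succ (v.length - (d+1)) htv
        have hel : (applyM φ (v.take (v.length - (d+1) + 1))).length
            = (applyM φ (v.take (v.length - (d+1)))).length
              + (φ (v[v.length - (d+1)]'htv)).length := by
          rw [hsucc]; simp
        have hφt := hφ1 (v[v.length - (d+1)]'htv)
        have hk1 : 1 ≤ K - d := by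
          rcases Nat.eq_zero_or_pos (K - d) with h0 | h1
          · exfalso
            rw [h0] at ihP
            simp [pretSeg] at ihP
            omega
          · exact h1
        have hlb := pret_letter_before h hρ u (K - d - 1)
        rw [show K - d - 1 + 1 = K - d by omega] at hlb
        have he1 : 1 ≤ (applyM φ (v.take (v.length - (d+1) + 1))).length := by omega
        have heLv : (applyM φ (v.take (v.length - (d+1) + 1))).length
            ≤ (applyM φ v).length := hlen_take _
        rw [show (pretSeg φ u (K - d)).length - 1
            = j + (applyM φ (v.take (v.length - (d+1) + 1))).length by omega] at hlb
        have hxv' := hxv _ he1 heLv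
        obtain ⟨lc, hlc⟩ := pret_split hρ (v[v.length - (d+1)]'htv)
        have hsplitv : applyM φ v
            = (applyM φ (v.take (v.length - (d+1))) ++ lc)
              ++ [ρ (v[v.length - (d+1)]'htv)] ++ applyM φ (v.drop (v.length - (d+1) + 1)) := by
          conv_lhs => rw [← List.take_append_drop (v.length - (d+1) + 1) v]
          rw [applyM_append, hsucc, hlc]
          simp [List.append_assoc]
        have hlc_len : lc.length + 1 = (φ (v[v.length - (d+1)]'htv)).length := by
          rw [hlc]; simp
        have hgv : (applyM φ v)[(applyM φ (v.take (v.length - (d+1) + 1))).length - 1]'(by omega)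
            = ρ (v[v.length - (d+1)]'htv) := by
          rw [List.getElem_of_eq hsplitv]
          exact getElem_mid (by simp; omega) (by simp; omega)
        have hukt : u (K - d - 1) = v[v.length - (d+1)]'htv := by
          apply hinj
          rw [← hlb, hxv', hgv]
        have hPk1 : (pretSeg φ u (K - d - 1)).length
            + (φ (v[v.length - (d+1)]'htv)).length = (pretSeg φ u (K - d)).length := by
          have hsx := pretSeg_succ φ u (K - d - 1)
          rw [show K - d - 1 + 1 = K - d by omega] at hsx
          rw [hsx, hukt]
          simp
        refine ⟨?_, by omega, ?_⟩
        · rw [show K - (d+1) = K - d - 1 by omega]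
          omega
        · intro s hs1 hs2
          rcases Nat.eq_or_lt_of_le hs1 with hst | hst
          · rw [show K - (v.length - s) = K - d - 1 by omega]
            rw [hukt]
            exact getElem_congr_idx (c := v) hst
          · exact ihlet s (by omega) hs2
    obtain ⟨hP0, hKd, hlet0⟩ := C v.length (le_refl _)
    rw [Nat.sub_self] at hP0 hlet0
    simp only [List.take_zero] at hP0
    have hP0' : (pretSeg φ u (K - v.length)).length = j + 1 := by
      simpa [applyM] using hP0
    have hk01 : 1 ≤ K - v.length := by
      rcases Nat.eq_zero_or_pos (K - v.length) with h0 | h1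
      · exfalso
        rw [h0] at hP0'
        simp [pretSeg] at hP0'
      · exact h1
    have hua : u (K - v.length - 1) = a := by
      apply hinj
      have hlb0 := pret_letter_before h hρ u (K - v.length - 1)
      rw [show K - v.length - 1 + 1 = K - v.length by omega, hP0',
        show j + 1 - 1 = j by omega] at hlb0
      rw [← hlb0]
      exact hx0
    have hub : u K = b := by
      apply hinj
      have haw := pret_letter_after_w h hρ u K
      rw [← hK] at haw
      rw [← haw]
      exact hxb
    refine ⟨K - v.length - 1, occursAt_of_letters ?_⟩
    intro t ht
    have ht' : t < v.length + 2 := by simp at ht; omega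
    rcases t with _ | s
    · simpa using hua
    · rcases Nat.lt_or_ge s v.length with hs | hs
      · rw [show K - v.length - 1 + (s+1) = K - (v.length - s) by omega]
        rw [hlet0 s (by omega) hs]
        simp only [List.getElem_cons_succ]
        exact (List.getElem_append_left hs).symm
      · have hsv : s = v.length := by omega
        rw [show K - v.length - 1 + (s+1) = K by omega]
        rw [hub]
        simp only [List.getElem_cons_succ]
        exact (List.getElem_concat_length hsv (by simp [hsv])).symm
end

section
/- Let A be a finite alphabet, u ∈ A^ℕ an infinite word, and φ: A* → A* a morphism in Class P_ret with marker w such that the last letters of the words φ(c), c ∈ A, are not all equal and the map sending each letter c to the last letter of φ(c) is injective. If v is a bispecial factor of φ(u) which contains w as a factor, then there exists a bispecial factor x of u such that v = φ(x)w. -/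
open List

namespace PretAux

open List

variable {A : Type*} [DecidableEq A]

theorem applyM_append (φ : A → List A) (x y : List A) :
    applyM φ (x ++ y) = applyM φ x ++ applyM φ y := by
  simp [applyM]

theorem applyM_cons (φ : A → List A) (a : A) (x : List A) :
    applyM φ (a :: x) = φ a ++ applyM φ x := by
  simp [applyM]

theorem applyM_singleton (φ : A → List A) (a : A) : applyM φ [a] = φ a := by
  simp [applyM]

theorem applyM_concat (φ : A → List A) (x : List A) (c : A) :
    applyM φ (x ++ [c]) = applyM φ x ++ φ c := by
  rw [applyM_append, applyM_singleton]

@[simp] theorem factorAt_length (u : ℕ → A) (i len : ℕ) :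
    (factorAt u i len).length = len := by simp [factorAt]

theorem factorAt_getElem? (u : ℕ → A) {i len r : ℕ} (hr : r < len) :
    (factorAt u i len)[r]? = some (u (i + r)) := by
  simp [factorAt, List.getElem?_map, List.getElem?_range hr]

theorem factorAt_append (u : ℕ → A) (i a b : ℕ) :
    factorAt u i a ++ factorAt u (i + a) b = factorAt u i (a + b) := by
  apply List.ext_getElem?
  intro r
  rcases Nat.lt_or_ge r a with hr | hr
  · rw [List.getElem?_append_left (by simpa using hr), factorAt_getElem? u hr,
      factorAt_getElem? u (show r < a + b by omega)]
  · rcases Nat.lt_or_ge r (a + b) with hr2 | hr2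
    · rw [List.getElem?_append_right (by simpa using hr), factorAt_length,
        factorAt_getElem? u (show r - a < b by omega), factorAt_getElem? u hr2]
      have e : i + a + (r - a) = i + r := by omega
      rw [e]
    · rw [List.getElem?_eq_none (by simp; omega), List.getElem?_eq_none (by simp; omega)]

theorem factorAt_one (u : ℕ → A) (i : ℕ) : factorAt u i 1 = [u i] := by
  simp [factorAt, List.range_succ]

theorem factorAt_take (u : ℕ → A) (i m k : ℕ) (hk : k ≤ m) :
    (factorAt u i m).take k = factorAt u i k := by
  rw [factorAt, ← List.map_take, List.take_range, inf_eq_left.mpr hk]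
  rfl

theorem occursAt_self (u : ℕ → A) (i len : ℕ) : OccursAt u (factorAt u i len) i := by
  rw [OccursAt, factorAt_length]

theorem occursAt_iff (x : ℕ → A) (v : List A) (i : ℕ) :
    OccursAt x v i ↔ ∀ r < v.length, v[r]? = some (x (i + r)) := by
  constructor
  · intro H r hr
    conv_lhs => rw [← H]
    exact factorAt_getElem? x hr
  · intro H
    apply List.ext_getElem?
    intro r
    rcases Nat.lt_or_ge r v.length with hr | hr
    · rw [factorAt_getElem? x hr, H r hr]
    · rw [List.getElem?_eq_none (by simpa using hr), List.getElem?_eq_none hr]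

theorem mem_occs {w s : List A} {i : ℕ} :
    i ∈ occs w s ↔ i + w.length ≤ s.length ∧ (s.drop i).take w.length = w := by
  simp only [occs, Finset.mem_filter, Finset.mem_range]
  constructor
  · rintro ⟨-, h2, h3⟩; exact ⟨h2, h3⟩
  · rintro ⟨h2, h3⟩; exact ⟨by omega, h2, h3⟩

theorem take_drop_eq_of_pointwise (s t : List A) (p : ℕ) (hlen : p + t.length ≤ s.length)
    (hpt : ∀ r < t.length, s[p + r]? = t[r]?) : (s.drop p).take t.length = t := by
  apply List.ext_getElem?
  intro r
  rcases Nat.lt_or_ge r t.length with hr | hr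
  · rw [List.getElem?_take]
    simp only [hr, if_pos]
    rw [List.getElem?_drop, hpt r hr]
  · rw [List.getElem?_eq_none hr, List.getElem?_eq_none (by simp; omega)]

/-- image of the prefix of length `m`. -/
def Wd (φ : A → List A) (u : ℕ → A) (m : ℕ) : List A := applyM φ (factorAt u 0 m)

/-- boundary positions. -/
def Bd (φ : A → List A) (u : ℕ → A) (m : ℕ) : ℕ := (Wd φ u m).length

@[simp] theorem Wd_zero (φ : A → List A) (u : ℕ → A) : Wd φ u 0 = [] := by
  simp [Wd, factorAt, applyM]

@[simp] theorem Bd_zero (φ : A → List A) (u : ℕ → A) : Bd φ u 0 = 0 := by simp [Bd]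

theorem Wd_length (φ : A → List A) (u : ℕ → A) (m : ℕ) :
    (Wd φ u m).length = Bd φ u m := rfl

theorem Wd_split (φ : A → List A) (u : ℕ → A) {m n : ℕ} (hmn : m ≤ n) :
    Wd φ u n = Wd φ u m ++ applyM φ (factorAt u m (n - m)) := by
  rw [Wd, Wd, ← applyM_append]
  congr 1
  have e := factorAt_append u 0 m (n - m)
  simp only [Nat.zero_add] at e
  rw [e]
  congr 1
  omega

theorem Wd_succ (φ : A → List A) (u : ℕ → A) (m : ℕ) :
    Wd φ u (m + 1) = Wd φ u m ++ φ (u m) := by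
  rw [Wd_split φ u (Nat.le_succ m)]
  simp [factorAt_one]
  rw [applyM_singleton]

theorem Bd_succ (φ : A → List A) (u : ℕ → A) (m : ℕ) :
    Bd φ u (m + 1) = Bd φ u m + (φ (u m)).length := by
  simp [Bd, Wd_succ]

section WithH

variable {φ : A → List A} {w : List A} {u : ℕ → A}

theorem hfl (h : IsPretWithMarker φ w) (a : A) : 0 < (φ a).length :=
  Nat.pos_of_ne_zero (h.2.2 a).2.2

theorem self_le_Bd (h : IsPretWithMarker φ w) (m : ℕ) : m ≤ Bd φ u m := by
  induction m with
  | zero => simp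
  | succ m ih => rw [Bd_succ]; have := hfl h (u m); omega

theorem Bd_add_le (h : IsPretWithMarker φ w) (k d : ℕ) :
    Bd φ u k + d ≤ Bd φ u (k + d) := by
  induction d with
  | zero => simp
  | succ d ih =>
    have e : k + (d + 1) = (k + d) + 1 := by omega
    rw [e, Bd_succ]
    have := hfl h (u (k + d))
    omega

theorem Bd_lt_of_lt (h : IsPretWithMarker φ w) {m n : ℕ} (hmn : m < n) :
    Bd φ u m < Bd φ u n := by
  have h1 := Bd_add_le (u := u) h m (n - m)
  have h2 : m + (n - m) = n := by omega
  rw [h2] at h1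
  omega

theorem le_of_Bd_le (h : IsPretWithMarker φ w) {m n : ℕ} (hmn : Bd φ u m ≤ Bd φ u n) :
    m ≤ n := by
  by_contra hc
  exact absurd hmn (not_le.mpr (Bd_lt_of_lt h (by omega)))

/-- `Wd m` is pointwise the infinite word `applyInf φ u`. -/
theorem getU (h : IsPretWithMarker φ w) {n m : ℕ} (hn : n < Bd φ u m) :
    (Wd φ u m)[n]? = some (applyInf φ u n) := by
  have key : (Wd φ u (n + 1))[n]? = some (applyInf φ u n) := by
    have hW : Wd φ u (n + 1) = (List.range (n + 1)).flatMap fun i => φ (u i) := by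
      simp [Wd, factorAt, applyM, List.flatMap_map]
    have hlen : n < (Wd φ u (n + 1)).length := by
      have := self_le_Bd (u := u) h (n + 1); simp only [Bd] at this; omega
    rw [List.getElem?_eq_getElem hlen]
    rw [applyInf, ← hW, List.getD_eq_getElem _ _ hlen]
  rcases le_total m (n + 1) with hm | hm
  · obtain ⟨t, ht⟩ : ∃ t, Wd φ u (n + 1) = Wd φ u m ++ t :=
      ⟨_, Wd_split φ u hm⟩
    rw [ht, List.getElem?_append_left hn] at key
    exact key
  · obtain ⟨t, ht⟩ : ∃ t, Wd φ u m = Wd φ u (n + 1) ++ t :=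
      ⟨_, Wd_split φ u hm⟩
    have hn2 : n < Bd φ u (n + 1) := by
      have := self_le_Bd (u := u) h (n + 1); omega
    rw [ht, List.getElem?_append_left hn2]
    exact key

theorem hwpref (h : IsPretWithMarker φ w) (a : A) : w <+: φ a ++ w := by
  have h0 : (0 : ℕ) ∈ occs w (φ a ++ w) := by
    rw [(h.2.2 a).2.1]; simp
  rw [mem_occs] at h0
  have h2 := h0.2
  simp only [List.drop_zero] at h2
  conv_lhs => rw [← h2]
  exact List.take_prefix _ _

theorem hwpref_flat (h : IsPretWithMarker φ w) (z : List A) : w <+: applyM φ z ++ w := by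
  induction z with
  | nil => simp [applyM]
  | cons a z ih =>
    rw [applyM_cons, List.append_assoc]
    obtain ⟨t, ht⟩ := ih
    rw [← ht, ← List.append_assoc]
    exact (hwpref h a).trans (List.prefix_append _ _)

theorem take_trick (L P Q : List A) (p n : ℕ) (hPQ : P <+: Q) (hn : n ≤ P.length)
    (hp : p ≤ L.length) :
    ((L ++ Q).drop p).take n = ((L ++ P).drop p).take n := by
  obtain ⟨R, rfl⟩ := hPQ
  rw [List.drop_append_of_le_length hp, List.drop_append_of_le_length hp,
    ← List.append_assoc,
    List.take_append_of_le_length (by simp only [List.length_append]; omega)]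

theorem sync_fin (h : IsPretWithMarker φ w) :
    ∀ z : List A, ∀ p : ℕ, p + w.length ≤ (applyM φ z).length →
      ((applyM φ z ++ w).drop p).take w.length = w →
      ∃ k ≤ z.length, p = (applyM φ (z.take k)).length := by
  intro z
  induction z with
  | nil =>
    intro p hp _
    refine ⟨0, by simp, ?_⟩
    simp [applyM] at hp ⊢
    omega
  | cons a z ih =>
    intro p hp hocc
    rw [applyM_cons] at hp hocc
    rw [List.append_assoc] at hocc
    rcases Nat.lt_or_ge p (φ a).length with hcase | hcase
    · have hocc2 : ((φ a ++ w).drop p).take w.length = w := by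
        rw [← take_trick (φ a) w (applyM φ z ++ w) p w.length
          (hwpref_flat h z) le_rfl hcase.le]
        exact hocc
      have hmem : p ∈ occs w (φ a ++ w) := mem_occs.mpr ⟨by simp; omega, hocc2⟩
      rw [(h.2.2 a).2.1] at hmem
      simp only [Finset.mem_insert, Finset.mem_singleton] at hmem
      have hp0 : p = 0 := by omega
      exact ⟨0, by simp, by simp [applyM, hp0]⟩
    · obtain ⟨d, rfl⟩ : ∃ d, p = (φ a).length + d := ⟨p - (φ a).length, by omega⟩
      have hdrop : (φ a ++ (applyM φ z ++ w)).drop ((φ a).length + d)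
          = (applyM φ z ++ w).drop d := by
        rw [← List.drop_drop, List.drop_left]
      have hp' : d + w.length ≤ (applyM φ z).length := by
        simp only [List.length_append] at hp; omega
      have hocc' : ((applyM φ z ++ w).drop d).take w.length = w := by
        rw [← hdrop]; exact hocc
      obtain ⟨k, hk, hpk⟩ := ih d hp' hocc'
      refine ⟨k + 1, by simp; omega, ?_⟩
      rw [List.take_succ_cons, applyM_cons, List.length_append, hpk]

/-- every occurrence of `w` in `applyInf φ u` is at a boundary. -/
theorem syncU (h : IsPretWithMarker φ w) {p : ℕ} (hp : OccursAt (applyInf φ u) w p) :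
    ∃ k, p = Bd φ u k := by
  rw [occursAt_iff] at hp
  set m := p + w.length with hm
  have hmB : p + w.length ≤ Bd φ u m := self_le_Bd h m
  have hocc : ((applyM φ (factorAt u 0 m) ++ w).drop p).take w.length = w := by
    apply take_drop_eq_of_pointwise
    · simp only [List.length_append]
      have e : (applyM φ (factorAt u 0 m)).length = Bd φ u m := rfl
      omega
    · intro r hr
      rw [List.getElem?_append_left (by
        have e : (applyM φ (factorAt u 0 m)).length = Bd φ u m := rfl
        omega)]
      have e : (applyM φ (factorAt u 0 m))[p + r]? = (Wd φ u m)[p + r]? := rfl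
      rw [e, getU h (by omega), hp r hr]
  obtain ⟨k, hk, hpk⟩ := sync_fin h (factorAt u 0 m) p (by
    have e : (applyM φ (factorAt u 0 m)).length = Bd φ u m := rfl
    omega) hocc
  refine ⟨k, ?_⟩
  rw [hpk, factorAt_take u 0 m k (by simpa using hk)]
  rfl

/-- the marker `w` occurs at every boundary. -/
theorem boundary_w (h : IsPretWithMarker φ w) (k r : ℕ) (hr : r < w.length) :
    w[r]? = some (applyInf φ u (Bd φ u k + r)) := by
  obtain ⟨n, hn⟩ : ∃ n, n = k + w.length := ⟨_, rfl⟩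
  obtain ⟨X, hX⟩ : ∃ X, applyM φ (factorAt u k (n - k)) = X := ⟨_, rfl⟩
  have hsplit := Wd_split φ u (show k ≤ n by omega)
  rw [hX] at hsplit
  have hXlen : X.length = Bd φ u n - Bd φ u k ∧ Bd φ u k ≤ Bd φ u n := by
    have e1 : (Wd φ u n).length = Bd φ u n := rfl
    have e2 : (Wd φ u k).length = Bd φ u k := rfl
    rw [hsplit] at e1
    simp only [List.length_append] at e1
    omega
  have hadd := Bd_add_le (u := u) h k w.length
  rw [← hn] at hadd
  have hwle : w.length ≤ X.length := by omega
  have h1 : w[r]? = X[r]? := by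
    obtain ⟨t, ht⟩ := hwpref_flat h (factorAt u k (n - k))
    rw [hX] at ht
    calc w[r]? = (w ++ t)[r]? := (List.getElem?_append_left hr).symm
    _ = (X ++ w)[r]? := by rw [ht]
    _ = X[r]? := List.getElem?_append_left (by omega)
  have h2 : X[r]? = (Wd φ u n)[Bd φ u k + r]? := by
    rw [hsplit]
    rw [List.getElem?_append_right (by
      have e : (Wd φ u k).length = Bd φ u k := rfl
      omega)]
    congr 1
    have e : (Wd φ u k).length = Bd φ u k := rfl
    omega
  rw [h1, h2, getU h (by omega)]

/-- letters after the `k`-th boundary follow `φ(u k) ++ w`. -/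
theorem block_letter (h : IsPretWithMarker φ w) (k r : ℕ)
    (hr : r < (φ (u k)).length + w.length) :
    (φ (u k) ++ w)[r]? = some (applyInf φ u (Bd φ u k + r)) := by
  rcases Nat.lt_or_ge r (φ (u k)).length with hc | hc
  · rw [List.getElem?_append_left hc]
    have h1 : (φ (u k))[r]? = (Wd φ u (k + 1))[Bd φ u k + r]? := by
      rw [Wd_succ]
      rw [List.getElem?_append_right (by
        have e : (Wd φ u k).length = Bd φ u k := rfl
        omega)]
      congr 1
      have e : (Wd φ u k).length = Bd φ u k := rfl
      omega
    rw [h1, getU h (by rw [Bd_succ]; omega)]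
  · rw [List.getElem?_append_right hc]
    have hb := boundary_w (u := u) h (k + 1) (r - (φ (u k)).length) (by omega)
    rw [hb]
    have e : Bd φ u (k + 1) + (r - (φ (u k)).length) = Bd φ u k + r := by
      rw [Bd_succ]; omega
    rw [e]

theorem applyM_eq_nil_iff (h : IsPretWithMarker φ w) {x : List A} :
    applyM φ x = [] ↔ x = [] := by
  constructor
  · intro hx
    cases x with
    | nil => rfl
    | cons a t =>
      rw [applyM_cons] at hx
      have h2 := List.append_eq_nil_iff.mp hx
      have h1 := hfl h a
      rw [h2.1] at h1
      simp at h1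
  · rintro rfl; simp [applyM]

theorem applyM_inj (h : IsPretWithMarker φ w) {ρ : A → A}
    (hρ : ∀ c : A, (φ c).getLast? = some (ρ c)) (hinj : Function.Injective ρ) :
    ∀ x y : List A, applyM φ x = applyM φ y → x = y := by
  intro x
  induction x using List.reverseRecOn with
  | nil =>
    intro y hy
    simp only [applyM, List.flatMap_nil] at hy
    exact ((applyM_eq_nil_iff h).mp hy.symm).symm
  | append_singleton x c ih =>
    intro y hy
    rcases List.eq_nil_or_concat y with rfl | ⟨y', d, rfl⟩
    · simp only [applyM, List.flatMap_nil] at hy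
      exact absurd ((applyM_eq_nil_iff h).mp hy) (by simp)
    · rw [List.concat_eq_append] at *
      rw [applyM_concat, applyM_concat] at hy
      have hne_c : φ c ≠ [] := by
        intro hc; have := hfl h c; rw [hc] at this; simp at this
      have hne_d : φ d ≠ [] := by
        intro hc; have := hfl h d; rw [hc] at this; simp at this
      have hlast : (applyM φ x ++ φ c).getLast? = (applyM φ y' ++ φ d).getLast? := by
        rw [hy]
      rw [List.getLast?_append_of_ne_nil _ hne_c, List.getLast?_append_of_ne_nil _ hne_d,
        hρ c, hρ d] at hlast
      have hcd : c = d := hinj (by injection hlast)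
      subst hcd
      have hxy : applyM φ x = applyM φ y' := List.append_cancel_right hy
      rw [ih y' hxy]

theorem rho_of_pal (h : IsPretWithMarker φ w) {ρ : A → A}
    (hρ : ∀ c : A, (φ c).getLast? = some (ρ c)) (c : A) :
    (φ c ++ w)[w.length]? = some (ρ c) := by
  have hpal := (h.2.2 c).1
  have hlen : w.length < (φ c ++ w).length := by
    simp only [List.length_append]
    have := hfl h c
    omega
  have h1 : (φ c ++ w)[w.length]? = (φ c ++ w).reverse[w.length]? := by
    conv_rhs => rw [hpal]
  rw [h1, List.getElem?_reverse hlen]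
  simp only [List.length_append]
  have h2 : (φ c).length + w.length - 1 - w.length = (φ c).length - 1 := by omega
  rw [h2]
  have h3 : ((φ c ++ w))[(φ c).length - 1]? = (φ c)[(φ c).length - 1]? :=
    List.getElem?_append_left (by have := hfl h c; omega)
  rw [h3, ← List.getLast?_eq_getElem?, hρ c]

end WithH

end PretAux

open PretAux

/-- Let `φ ∈ P_ret` be marked with marker `w` and equal to its rightmost
conjugate. Every bispecial factor `v` of `φ(u)` containing `w` is of the form
`v = φ(x)w` for some bispecial factor `x` of `u`. -/
theorem pret_marked_bispecial_preimage {A : Type*} [Fintype A] [DecidableEq A]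
    (φ : A → List A) (w : List A) (ρ : A → A) (h : IsPretWithMarker φ w)
    (hρ : ∀ c : A, (φ c).getLast? = some (ρ c))
    (hne : ∃ c d : A, ρ c ≠ ρ d)
    (hinj : Function.Injective ρ)
    (u : ℕ → A) (v : List A)
    (hbs : Bispecial (applyInf φ u) v) (hw : w <:+: v) :
    ∃ x : List A, Bispecial u x ∧ v = applyM φ x ++ w := by
  classical
  -- the set of occurrences of `w` in `v` is nonempty
  have hOne : (occs w v).Nonempty := by
    obtain ⟨s, t, hst⟩ := hw
    refine ⟨s.length, mem_occs.mpr ⟨?_, ?_⟩⟩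
    · have := congrArg List.length hst
      simp only [List.length_append] at this
      omega
    · rw [← hst, List.append_assoc, List.drop_left]
      exact List.take_left
  set J := (occs w v).min' hOne with hJdef
  set J' := (occs w v).max' hOne with hJ'def
  have hJmem : J ∈ occs w v := (occs w v).min'_mem hOne
  have hJ'mem : J' ∈ occs w v := (occs w v).max'_mem hOne
  have hJle : ∀ q ∈ occs w v, J ≤ q := fun q hq => (occs w v).min'_le q hq
  have hleJ' : ∀ q ∈ occs w v, q ≤ J' := fun q hq => (occs w v).le_max' q hq
  have hJlen : J + w.length ≤ v.length := (mem_occs.mp hJmem).1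
  have hJ'len : J' + w.length ≤ v.length := (mem_occs.mp hJ'mem).1
  have hvElem : ∀ {i : ℕ}, OccursAt (applyInf φ u) v i →
      ∀ r < v.length, v[r]? = some (applyInf φ u (i + r)) :=
    fun {i} hv => (occursAt_iff _ v i).mp hv
  -- two occurrence-extension facts
  have cons_occ : ∀ (a : A) (p : ℕ), OccursAt (applyInf φ u) (a :: v) p →
      OccursAt (applyInf φ u) v (p + 1) ∧ a = applyInf φ u p := by
    intro a p hp
    have hp' := (occursAt_iff _ _ _).mp hp
    constructor
    · rw [occursAt_iff]
      intro r hr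
      have h1 := hp' (r + 1) (by simp; omega)
      rw [List.getElem?_cons_succ] at h1
      rw [h1]
      have e : p + (r + 1) = p + 1 + r := by omega
      rw [e]
    · have h1 := hp' 0 (by simp)
      simp only [List.getElem?_cons_zero, Nat.add_zero] at h1
      injection h1
  have snoc_occ : ∀ (b : A) (p : ℕ), OccursAt (applyInf φ u) (v ++ [b]) p →
      OccursAt (applyInf φ u) v p ∧ b = applyInf φ u (p + v.length) := by
    intro b p hp
    have hp' := (occursAt_iff _ _ _).mp hp
    constructor
    · rw [occursAt_iff]
      intro r hr
      have h1 := hp' r (by simp; omega)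
      rw [List.getElem?_append_left hr] at h1
      exact h1
    · have h1 := hp' v.length (by simp)
      rw [List.getElem?_append_right le_rfl] at h1
      simp only [Nat.sub_self, List.getElem?_cons_zero] at h1
      injection h1
  -- synchronization: occurrences of `w` inside occurrences of `v` are at boundaries
  have occ_sync : ∀ i, OccursAt (applyInf φ u) v i → ∀ q ∈ occs w v,
      ∃ k, i + q = Bd φ u k := by
    intro i hv q hq
    obtain ⟨hq1, hq2⟩ := mem_occs.mp hq
    apply syncU h
    rw [occursAt_iff]
    intro r hr
    have h1 : v[q + r]? = some (applyInf φ u (i + (q + r))) := hvElem hv (q + r) (by omega)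
    have h2 : w[r]? = v[q + r]? := by
      conv_lhs => rw [← hq2]
      rw [List.getElem?_take]
      simp only [hr, if_pos]
      rw [List.getElem?_drop]
    rw [h2, h1]
    have e : i + (q + r) = i + q + r := by omega
    rw [e]
  -- a boundary inside `v` is an occurrence of `w` in `v`
  have w_at : ∀ i k, OccursAt (applyInf φ u) v i → i ≤ Bd φ u k →
      Bd φ u k + w.length ≤ i + v.length → (Bd φ u k - i) ∈ occs w v := by
    intro i k hv h1 h2
    apply mem_occs.mpr
    refine ⟨by omega, ?_⟩
    apply take_drop_eq_of_pointwise _ _ _ (by omega)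
    intro r hr
    have e1 : v[Bd φ u k - i + r]? = some (applyInf φ u (i + (Bd φ u k - i + r))) :=
      hvElem hv _ (by omega)
    have e2 : i + (Bd φ u k - i + r) = Bd φ u k + r := by omega
    rw [e1, e2]
    exact (boundary_w (u := u) h k r hr).symm
  -- STEP L : the first occurrence of `w` in `v` is at position 0
  have hJ0 : J = 0 := by
    by_contra hJ0
    have key : ∀ a ∈ leftExt (applyInf φ u) v, ∃ c : A,
        v[J - 1]? = some (ρ c) ∧ (φ c)[(φ c).length - 1 - J]? = some a := by
      intro a ha
      obtain ⟨p, hp⟩ := ha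
      obtain ⟨hv, ha'⟩ := cons_occ a p hp
      obtain ⟨k, hk⟩ := occ_sync (p + 1) hv J hJmem
      have hk0 : k ≠ 0 := by
        intro h0; rw [h0, Bd_zero] at hk; omega
      obtain ⟨k', rfl⟩ : ∃ k', k = k' + 1 := ⟨k - 1, by omega⟩
      have hBsucc : Bd φ u (k' + 1) = Bd φ u k' + (φ (u k')).length := Bd_succ φ u k'
      have hlt2 : Bd φ u k' < Bd φ u (k' + 1) := Bd_lt_of_lt h (Nat.lt_succ_self k')
      have hfc := hfl h (u k')
      have hlt : Bd φ u k' < p + 1 := by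
        by_contra hle
        push_neg at hle
        have hmem := w_at (p + 1) k' hv hle (by omega)
        have := hJle _ hmem
        omega
      refine ⟨u k', ?_, ?_⟩
      · have e1 : v[J - 1]? = some (applyInf φ u (p + 1 + (J - 1))) :=
          hvElem hv (J - 1) (by omega)
        have e2 := block_letter (u := u) h k' ((φ (u k')).length - 1) (by omega)
        rw [List.getElem?_append_left (by omega), ← List.getLast?_eq_getElem?,
          hρ (u k')] at e2
        have e3 : Bd φ u k' + ((φ (u k')).length - 1) = p + 1 + (J - 1) := by omega
        rw [e3] at e2
        rw [e1, ← e2]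
      · have e3 := block_letter (u := u) h k' (p - Bd φ u k') (by omega)
        rw [List.getElem?_append_left (by omega)] at e3
        have e4 : (φ (u k')).length - 1 - J = p - Bd φ u k' := by omega
        have e5 : Bd φ u k' + (p - Bd φ u k') = p := by omega
        rw [e4, e3, e5, ha']
    have hcard : (leftExt (applyInf φ u) v).ncard ≤ 1 := by
      rw [Set.ncard_le_one (Set.toFinite _)]
      intro a1 h1 a2 h2
      obtain ⟨c1, hc1, ha1⟩ := key a1 h1
      obtain ⟨c2, hc2, ha2⟩ := key a2 h2
      have hcc : c1 = c2 := hinj (by rw [hc1] at hc2; injection hc2)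
      rw [hcc, ha2] at ha1
      injection ha1 with e
      exact e.symm
    have := hbs.1
    omega
  -- STEP R : `v` ends exactly `|w|` letters after its last `w`-occurrence
  have hL : v.length - J' = w.length := by
    by_contra hLne
    have hLgt : w.length < v.length - J' := by omega
    have key : ∀ b ∈ rightExt (applyInf φ u) v, ∃ c : A,
        v[J' + w.length]? = some (ρ c) ∧
        (φ c ++ w)[v.length - J']? = some b := by
      intro b hb
      obtain ⟨p, hp⟩ := hb
      obtain ⟨hv, hb'⟩ := snoc_occ b p hp
      obtain ⟨k, hk⟩ := occ_sync p hv J' hJ'mem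
      have hBsucc : Bd φ u (k + 1) = Bd φ u k + (φ (u k)).length := Bd_succ φ u k
      have hkk : Bd φ u k < Bd φ u (k + 1) := Bd_lt_of_lt h (Nat.lt_succ_self k)
      have hfc := hfl h (u k)
      have hend : p + v.length < Bd φ u (k + 1) + w.length := by
        by_contra hle
        push_neg at hle
        have hmem := w_at p (k + 1) hv (by omega) hle
        have := hleJ' _ hmem
        omega
      refine ⟨u k, ?_, ?_⟩
      · have e1 : v[J' + w.length]? = some (applyInf φ u (p + (J' + w.length))) :=
          hvElem hv _ (by omega)
        have e2 := block_letter (u := u) h k w.length (by omega)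
        rw [rho_of_pal h hρ (u k)] at e2
        have e3 : Bd φ u k + w.length = p + (J' + w.length) := by omega
        rw [e3] at e2
        rw [e1, ← e2]
      · have e3 := block_letter (u := u) h k (v.length - J') (by omega)
        have e4 : Bd φ u k + (v.length - J') = p + v.length := by omega
        rw [e4] at e3
        rw [e3, hb']
    have hcard : (rightExt (applyInf φ u) v).ncard ≤ 1 := by
      rw [Set.ncard_le_one (Set.toFinite _)]
      intro b1 h1 b2 h2
      obtain ⟨c1, hc1, hb1⟩ := key b1 h1
      obtain ⟨c2, hc2, hb2⟩ := key b2 h2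
      have hcc : c1 = c2 := hinj (by rw [hc1] at hc2; injection hc2)
      rw [hcc, hb2] at hb1
      injection hb1 with e
      exact e.symm
    have := hbs.2
    omega
  -- parsing of an arbitrary occurrence of `v`
  have parse : ∀ i, OccursAt (applyInf φ u) v i → ∃ m n : ℕ, m ≤ n ∧ i = Bd φ u m ∧
      i + v.length = Bd φ u n + w.length ∧
      v = applyM φ (factorAt u m (n - m)) ++ w := by
    intro i hv
    obtain ⟨m, hm⟩ := occ_sync i hv J hJmem
    rw [hJ0, Nat.add_zero] at hm
    obtain ⟨n, hn⟩ := occ_sync i hv J' hJ'mem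
    have hmn : m ≤ n := le_of_Bd_le (u := u) h (by omega)
    obtain ⟨X, hX⟩ : ∃ X, applyM φ (factorAt u m (n - m)) = X := ⟨_, rfl⟩
    have hsplit := Wd_split φ u hmn
    rw [hX] at hsplit
    have hXlen : X.length = Bd φ u n - Bd φ u m ∧ Bd φ u m ≤ Bd φ u n := by
      have e1 : (Wd φ u n).length = Bd φ u n := rfl
      have e2 : (Wd φ u m).length = Bd φ u m := rfl
      rw [hsplit] at e1
      simp only [List.length_append] at e1
      omega
    have hvlen : v.length = X.length + w.length := by omega
    refine ⟨m, n, hmn, hm, by omega, ?_⟩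
    rw [hX]
    apply List.ext_getElem?
    intro r
    rcases Nat.lt_or_ge r v.length with hr | hr
    · rw [hvElem hv r hr]
      rcases Nat.lt_or_ge r X.length with hrX | hrX
      · rw [List.getElem?_append_left hrX]
        have e1 : X[r]? = (Wd φ u n)[Bd φ u m + r]? := by
          rw [hsplit, List.getElem?_append_right (by
            have e : (Wd φ u m).length = Bd φ u m := rfl
            omega)]
          congr 1
          have e : (Wd φ u m).length = Bd φ u m := rfl
          omega
        rw [e1, getU h (by omega)]
        have e2 : i + r = Bd φ u m + r := by omega
        rw [e2]
      · rw [List.getElem?_append_right hrX]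
        have e2 := boundary_w (u := u) h n (r - X.length) (by omega)
        rw [e2]
        have e3 : Bd φ u n + (r - X.length) = i + r := by omega
        rw [e3]
    · rw [List.getElem?_eq_none hr, List.getElem?_eq_none (by
        simp only [List.length_append]; omega)]
  -- choose one occurrence of `v`
  have hEx : ∃ i, OccursAt (applyInf φ u) v i := by
    have h2 := hbs.1
    obtain ⟨a, p, hp⟩ := Set.nonempty_of_ncard_ne_zero
      (s := leftExt (applyInf φ u) v) (by omega)
    exact ⟨p + 1, (cons_occ a p hp).1⟩
  obtain ⟨i0, hi0⟩ := hEx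
  obtain ⟨m0, n0, hmn0, him0, hilen0, hveq0⟩ := parse i0 hi0
  set x := factorAt u m0 (n0 - m0) with hxdef
  have xuniq : ∀ m n : ℕ, v = applyM φ (factorAt u m (n - m)) ++ w →
      factorAt u m (n - m) = x := by
    intro m n hv2
    apply applyM_inj h hρ hinj
    have e : applyM φ (factorAt u m (n - m)) ++ w = applyM φ x ++ w := by
      rw [← hv2, hveq0]
    exact List.append_cancel_right e
  refine ⟨x, ⟨?_, ?_⟩, hveq0⟩
  · -- left extensions
    have hsub : leftExt (applyInf φ u) v ⊆ ρ '' leftExt u x := by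
      intro a ha
      obtain ⟨p, hp⟩ := ha
      obtain ⟨hv, ha'⟩ := cons_occ a p hp
      obtain ⟨m, n, hmn, him, hilen, hveq⟩ := parse (p + 1) hv
      have hxeq := xuniq m n hveq
      have hm0 : m ≠ 0 := by
        intro h0; rw [h0, Bd_zero] at him; omega
      obtain ⟨m', rfl⟩ : ∃ m', m = m' + 1 := ⟨m - 1, by omega⟩
      have hBsucc : Bd φ u (m' + 1) = Bd φ u m' + (φ (u m')).length := Bd_succ φ u m'
      have hfc := hfl h (u m')
      have haρ : a = ρ (u m') := by
        have e2 := block_letter (u := u) h m' ((φ (u m')).length - 1) (by omega)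
        rw [List.getElem?_append_left (by omega), ← List.getLast?_eq_getElem?,
          hρ (u m')] at e2
        have e3 : Bd φ u m' + ((φ (u m')).length - 1) = p := by omega
        rw [e3] at e2
        rw [ha']
        injection e2 with e2'
        rw [e2']
      refine ⟨u m', ?_, haρ.symm⟩
      show InLang u (u m' :: x)
      have hx1 := factorAt_append u m' 1 (n - (m' + 1))
      rw [factorAt_one, List.singleton_append] at hx1
      rw [← hxeq, hx1]
      exact ⟨m', occursAt_self u m' _⟩
    have h1 := Set.ncard_le_ncard hsub (Set.toFinite _)
    rw [Set.ncard_image_of_injective _ hinj] at h1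
    exact le_trans hbs.1 h1
  · -- right extensions
    have hsub : rightExt (applyInf φ u) v ⊆ ρ '' rightExt u x := by
      intro b hb
      obtain ⟨p, hp⟩ := hb
      obtain ⟨hv, hb'⟩ := snoc_occ b p hp
      obtain ⟨m, n, hmn, him, hilen, hveq⟩ := parse p hv
      have hxeq := xuniq m n hveq
      have hfc := hfl h (u n)
      have hbρ : b = ρ (u n) := by
        have e2 := block_letter (u := u) h n w.length (by omega)
        rw [rho_of_pal h hρ (u n)] at e2
        have e3 : Bd φ u n + w.length = p + v.length := by omega
        rw [e3] at e2
        rw [hb']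
        injection e2 with e2'
        rw [e2']
      refine ⟨u n, ?_, hbρ.symm⟩
      show InLang u (x ++ [u n])
      have hmneq : m + (n - m) = n := by omega
      have hx2 := factorAt_append u m (n - m) 1
      rw [hmneq, factorAt_one] at hx2
      rw [← hxeq, hx2]
      exact ⟨m, occursAt_self u m _⟩
    have h1 := Set.ncard_le_ncard hsub (Set.toFinite _)
    rw [Set.ncard_image_of_injective _ hinj] at h1
    exact le_trans hbs.2 h1
end
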